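/- arXiv:2103.14609 — 5 statements merged into one kernel-verified Lean document; each statement's English description precedes it below -/
import Mathlib

section
/- If φ: ℚ≥1 → ℚ≥1 satisfies q - φ(q) ∈ ℕ and 1 ≤ φ(q) for all q, and t, v are nonempty words of equal length with v^q = (t^q)^R for some rational q ≥ 1 (where w^q denotes the q-power of w), then v^{φ(q)} = (t^{φ(q)})^R. -/
open scoped BigOperators

variable {α : Type*}

/-- The factor of the infinite word `w` (1-indexed) from position `i` to position `j`. -/
def Subword (w : ℕ → α) (i j : ℕ) : List α :=
  (List.range (j + 1 - i)).map fun n => w (i + n)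

/-- `t` is a finite factor of the infinite word `w` (positions are 1-indexed). -/
def IsFactorI (w : ℕ → α) (t : List α) : Prop :=
  ∃ i, 1 ≤ i ∧ t = (List.range t.length).map fun n => w (i + n)

/-- `t` occurs infinitely often in the infinite word `w`. -/
def RecurrentI (w : ℕ → α) (t : List α) : Prop :=
  ∀ N, ∃ i, N ≤ i ∧ t = (List.range t.length).map fun n => w (i + n)

/-- The infinite word `w` is ultimately periodic. -/
def UltimatelyPeriodic (w : ℕ → α) : Prop :=
  ∃ p N, 1 ≤ p ∧ ∀ n, N ≤ n → w (n + p) = w n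

/-- The `q`-power `u^q` of a finite word `u`, for a rational exponent `q ≥ 1`:
`u^⌊q⌋` followed by the prefix of `u` of length `(q - ⌊q⌋)·|u|`. -/
def fracPow (u : List α) (q : ℚ) : List α :=
  (List.replicate ⌊q⌋.toNat u).flatten ++
    u.take (⌊q * (u.length : ℚ)⌋.toNat - ⌊q⌋.toNat * u.length)

/-- A nonempty word is primitive if it is not a (possibly fractional) `q`-power,
`q ≥ 2`, of any word. -/
def Primitive (v : List α) : Prop :=
  v ≠ [] ∧ ∀ (t : List α) (q : ℚ), 2 ≤ q → v ≠ fracPow t q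

/-- `PowFactor u`: finite factors of `u^∞` together with finite factors of `(u^R)^∞`. -/
def IsPowFactor (u t : List α) : Prop :=
  (∃ k, t <:+: (List.replicate k u).flatten) ∨ (∃ k, t <:+: (List.replicate k u.reverse).flatten)

/-- `(i,j)` is a `u`-run of the infinite word `w` (with the fixed parameter `γ`). -/
def IsRun (γ : ℕ) (w : ℕ → α) (u : List α) (i j : ℕ) : Prop :=
  i < j ∧ (γ - 2) * u.length ≤ j - i + 1 ∧ u.length + 1 < i ∧
  IsPowFactor u (Subword w (i - u.length) (j + u.length)) ∧
  ¬ IsPowFactor u (Subword w (i - u.length - 1) (j + u.length)) ∧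
  ¬ IsPowFactor u (Subword w (i - u.length) (j + u.length + 1))

/-- Membership in the set `Π_γ(w)`. -/
def InPi (γ : ℕ) (w : ℕ → α) (u : List α) : Prop :=
  Primitive u ∧ IsFactorI w u ∧
  ¬ IsPowFactor u ((List.range (γ * u.length)).map fun n => w (1 + n)) ∧
  ∃ v : List α, v.length = u.length ∧ IsPowFactor u v ∧
    RecurrentI w ((List.replicate γ v).flatten)

/-- Palindromic length: the minimal number of nonempty palindromes whose
concatenation equals `v`. -/
noncomputable def PL (v : List α) : ℕ :=
  sInf {k | ∃ ps : List (List α), ps.flatten = v ∧ ps.length = k ∧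
    ∀ p ∈ ps, p ≠ [] ∧ p.reverse = p}

/-- `maxPL v`: the maximum of `PL` over the factors of `v`. -/
noncomputable def maxPL (v : List α) : ℕ :=
  sSup {n | ∃ t, t <:+: v ∧ n = PL t}

/-- `(I, J, W, Z, D)` is the run factorization `factrz(w,u)` of `w`:
`(I k, J k)` enumerates the `u`-runs in increasing order, `W k` is the inter-run
factor, and `w[I k, J k] = (Z k)^(D k)`. -/
structure IsFactrz (γ : ℕ) (w : ℕ → α) (u : List α)
    (I J : ℕ → ℕ) (W Z : ℕ → List α) (D : ℕ → ℚ) : Prop where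
  run : ∀ k, 1 ≤ k → IsRun γ w u (I k) (J k)
  mono : ∀ k, 1 ≤ k → I k < I (k + 1)
  complete : ∀ i j, IsRun γ w u i j → ∃ k, 1 ≤ k ∧ I k = i ∧ J k = j
  j0 : J 0 = 0
  wdef : ∀ k, 1 ≤ k → W k = Subword w (J (k - 1) + 1) (I k - 1)
  zlen : ∀ k, 1 ≤ k → (Z k).length = u.length
  zpow : ∀ k, 1 ≤ k → IsPowFactor u (Z k)
  dge : ∀ k, 1 ≤ k → 1 ≤ D k
  zd : ∀ k, 1 ≤ k → Subword w (I k) (J k) = fracPow (Z k) (D k)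

/-- Membership in `Φ_h` (with fixed parameter `γ`). -/
def InPhi (γ h : ℕ) (φ : ℚ → ℚ) : Prop :=
  ∀ q : ℚ, 1 ≤ q → ((γ : ℚ) - 2 ≤ φ q ∧ φ q < (h : ℚ) ∧ ∃ n : ℕ, q - φ q = (n : ℚ))

/-- The finite prefix `W 1 (Z 1)^(E 1) ⋯ W k (Z k)^(E k)` of the reduced word. -/
def redPrefix (W Z : ℕ → List α) (E : ℕ → ℚ) : ℕ → List α
  | 0 => []
  | k + 1 => redPrefix W Z E k ++ W (k + 1) ++ fracPow (Z (k + 1)) (E (k + 1))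

/-- `x` is the reduced word `W 1 (Z 1)^(E 1) W 2 (Z 2)^(E 2) ⋯` (1-indexed). -/
def IsReduce (W Z : ℕ → List α) (E : ℕ → ℚ) (x : ℕ → α) : Prop :=
  ∀ k, redPrefix W Z E k = (List.range (redPrefix W Z E k).length).map fun n => x (1 + n)

/-- Position `i` of `w` is not covered by any `u`-run. -/
def RpoDom (γ : ℕ) (w : ℕ → α) (u : List α) (i : ℕ) : Prop :=
  1 ≤ i ∧ ∀ a b, IsRun γ w u a b → ¬ (a ≤ i ∧ i ≤ b)

/-- `κ(j) = Σ_{i ≤ j} (|W i| + |(Z i)^(D i)|)`, the end position of the `j`-th run. -/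
def kappa (W Z : ℕ → List α) (D : ℕ → ℚ) (j : ℕ) : ℕ :=
  ∑ i ∈ Finset.Icc 1 j, ((W i).length + (fracPow (Z i) (D i)).length)

/-- The graph of the position bijection `rpo`: position `i` of `w` (with exponent
sequence `D`) corresponds to position `ib` of the reduced word (exponents `E`). -/
def RpoRel (W Z : ℕ → List α) (D E : ℕ → ℚ) (i ib : ℕ) : Prop :=
  ∃ j, kappa W Z D j < i ∧ i ≤ kappa W Z D (j + 1) ∧
    ib = kappa W Z E j + (i - kappa W Z D j)

/-- There are at most `N` `u`-runs entirely contained in `[a,b]`. -/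
def RunCountLe (γ : ℕ) (w : ℕ → α) (u : List α) (a b N : ℕ) : Prop :=
  ∀ S : Finset (ℕ × ℕ), (∀ p ∈ S, IsRun γ w u p.1 p.2 ∧ a ≤ p.1 ∧ p.2 ≤ b) → S.card ≤ N

/-- `(i,j)` is a standard palindrome of `w` with respect to `u`. -/
def IsStdPal (γ : ℕ) (w : ℕ → α) (u : List α) (i j : ℕ) : Prop :=
  i ≤ j ∧ RpoDom γ w u i ∧ RpoDom γ w u j ∧
  (Subword w (i - 1) (j + 1)).reverse = Subword w (i - 1) (j + 1) ∧
  (∀ m, i - 1 ≤ m → m ≤ min (i + u.length - 1) j → RpoDom γ w u m) ∧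
  (∀ m, max (j + 1 - u.length) i ≤ m → m ≤ j + 1 → RpoDom γ w u m) ∧
  (∀ m, i ≤ m → m ≤ j → (RpoDom γ w u m ↔ RpoDom γ w u (i + j - m)))

/-- `(m1,m2)` is a centered standard palindrome of `w[i,j]`. -/
def IsCnStdPal (γ : ℕ) (w : ℕ → α) (u : List α) (i j m1 m2 : ℕ) : Prop :=
  IsStdPal γ w u m1 m2 ∧ i ≤ m1 ∧ m2 ≤ j ∧ m1 - i = j - m2

def cyc (u : List α) (h : 0 < u.length) : ℕ → α := fun i => u[i % u.length]'(Nat.mod_lt i h)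

lemma join_replicate_eq (u : List α) (h : 0 < u.length) (a : ℕ) :
    (List.replicate a u).flatten = (List.range (a * u.length)).map (cyc u h) := by
  induction a with
  | zero => simp
  | succ a ih =>
    rw [List.replicate_succ', List.flatten_append, ih, Nat.succ_mul,
      List.range_add, List.map_append, List.map_map]
    congr 1
    apply List.ext_getElem (by simp)
    intro i h1 h2
    have h1' : i < u.length := by simpa using h1
    simp only [List.getElem_map, List.getElem_range, Function.comp_apply, cyc,
      List.flatten_cons, List.flatten_nil, List.append_nil, List.getElem_append]
    congr 1
    rw [Nat.add_comm, Nat.add_mul_mod_self_right, Nat.mod_eq_of_lt h1']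

lemma fracPow_eq (u : List α) (h : 0 < u.length) (q : ℚ) (hq : 1 ≤ q) (m : ℕ)
    (hm : (m : ℚ) = q * u.length) :
    fracPow u q = (List.range m).map (cyc u h) := by
  have hfq : (0:ℤ) ≤ ⌊q⌋ := by positivity
  have haq : ((⌊q⌋.toNat : ℕ) : ℚ) ≤ q := by
    have h2 : ((⌊q⌋.toNat:ℤ):ℚ) ≤ q := by rw [Int.toNat_of_nonneg hfq]; exact Int.floor_le q
    exact_mod_cast h2
  have hqa : q < ((⌊q⌋.toNat : ℕ) : ℚ) + 1 := by
    have h2 : q < ((⌊q⌋.toNat:ℤ):ℚ) + 1 := by rw [Int.toNat_of_nonneg hfq]; exact Int.lt_floor_add_one q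
    exact_mod_cast h2
  have hfloor : ⌊q * (u.length : ℚ)⌋.toNat = m := by
    rw [← hm]; simp
  have han : ⌊q⌋.toNat * u.length ≤ m := by
    have : ((⌊q⌋.toNat * u.length : ℕ) : ℚ) ≤ (m : ℚ) := by
      push_cast; rw [hm]; exact mul_le_mul_of_nonneg_right haq (by positivity)
    exact_mod_cast this
  have hm2 : m < ⌊q⌋.toNat * u.length + u.length := by
    have h3 : (m : ℚ) < ((⌊q⌋.toNat * u.length + u.length : ℕ) : ℚ) := by
      push_cast; rw [hm]
      have := mul_lt_mul_of_pos_right hqa (show (0:ℚ) < u.length by exact_mod_cast h)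
      rw [add_mul, one_mul] at this
      linarith
    exact_mod_cast h3
  rw [fracPow, hfloor, join_replicate_eq u h ⌊q⌋.toNat]
  have hsplit : m = ⌊q⌋.toNat * u.length + (m - ⌊q⌋.toNat * u.length) := by omega
  rw [hsplit, List.range_add, List.map_append, List.map_map]
  congr 1
  apply List.ext_getElem (by simp only [List.length_take, List.length_map, List.length_range]; omega)
  intro i h1 h2
  have h1' : i < u.length := by
    simp only [List.length_take] at h1; omega
  simp only [List.getElem_take, List.getElem_map, List.getElem_range, Function.comp_apply, cyc]
  congr 1
  rw [Nat.add_comm, Nat.mul_comm, Nat.add_mul_mod_self_left, Nat.mod_eq_of_lt h1']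

/-- exponent reduction preserves the reverse relation. -/
theorem fracPow_reverse_of_reduce {α : Type*} (φ : ℚ → ℚ)
    (hφ : ∀ q : ℚ, 1 ≤ q → (1 ≤ φ q ∧ ∃ n : ℕ, q - φ q = (n : ℚ)))
    (t v : List α) (ht : t ≠ []) (hv : v ≠ []) (hlen : v.length = t.length)
    (q : ℚ) (hq : 1 ≤ q) (hint : ∃ m : ℤ, q * (t.length : ℚ) = (m : ℚ))
    (hrev : fracPow v q = (fracPow t q).reverse) :
    fracPow v (φ q) = (fracPow t (φ q)).reverse := by
  have ht' : 0 < t.length := List.length_pos_iff.mpr ht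
  have hv' : 0 < v.length := List.length_pos_iff.mpr hv
  have htQ : (0:ℚ) < t.length := by exact_mod_cast ht'
  obtain ⟨hφ1, n₀, hn₀⟩ := hφ q hq
  have hφq : φ q = q - (n₀ : ℚ) := by linarith
  obtain ⟨mz, hmz⟩ := hint
  have hmz0 : 0 ≤ mz := by
    have : (0:ℚ) ≤ (mz:ℚ) := by rw [← hmz]; positivity
    exact_mod_cast this
  set m := mz.toNat with hmdef
  have hm : (m : ℚ) = q * t.length := by
    rw [hmdef, hmz]
    have h2 : ((mz.toNat:ℤ):ℚ) = (mz:ℚ) := by rw [Int.toNat_of_nonneg hmz0]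
    exact_mod_cast h2
  set K := n₀ * t.length with hK
  have hKQ : ((K:ℕ):ℚ) = (n₀:ℚ) * t.length := by rw [hK]; push_cast; ring
  have hKm : K ≤ m := by
    have : ((K:ℕ):ℚ) ≤ (m:ℚ) := by
      rw [hKQ, hm]
      have : (n₀:ℚ) * t.length ≤ (q - 1) * t.length := by
        apply mul_le_mul_of_nonneg_right _ (le_of_lt htQ)
        linarith
      nlinarith
    exact_mod_cast this
  set m' := m - K with hm'def
  have hmm : m = m' + K := by omega
  have hmmQ : (m:ℚ) = (m':ℚ) + (K:ℚ) := by exact_mod_cast congrArg (Nat.cast : ℕ → ℚ) hmm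
  have hm' : (m' : ℚ) = φ q * t.length := by
    rw [hφq, sub_mul]
    rw [hm] at hmmQ
    linarith [hKQ]
  have hq' : 1 ≤ φ q := hφ1
  have hmv : (m : ℚ) = q * v.length := by rw [hlen]; exact hm
  have hm'v : (m' : ℚ) = φ q * v.length := by rw [hlen]; exact hm'
  rw [fracPow_eq v hv' q hq m hmv, fracPow_eq t ht' q hq m hm] at hrev
  rw [fracPow_eq v hv' (φ q) hq' m' hm'v, fracPow_eq t ht' (φ q) hq' m' hm']
  have key : ∀ i, i < m → cyc v hv' i = cyc t ht' (m - 1 - i) := by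
    intro i hi
    have h1 := List.getElem_of_eq hrev (show i < ((List.range m).map (cyc v hv')).length by simpa using hi)
    rw [List.getElem_reverse] at h1
    simpa using h1
  apply List.ext_getElem (by simp)
  intro i h1 h2
  have hi : i < m' := by simpa using h1
  rw [List.getElem_reverse]
  simp only [List.getElem_map, List.getElem_range, List.length_map, List.length_range]
  have hik : i < m := by omega
  have := key i hik
  rw [this]
  show cyc t ht' (m - 1 - i) = cyc t ht' (m' - 1 - i)
  have harith : m - 1 - i = (m' - 1 - i) + n₀ * t.length := by rw [← hK]; omega
  simp only [cyc]
  congr 1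
  rw [harith, Nat.add_mul_mod_self_right]
end

section
/- Let w be an infinite word, u a primitive nonempty factor, and suppose (i1,j1) and (i2,j2) are both u-runs of w with i1 < i2. Then j1 + |u| + 1 < i2; i.e., distinct runs are separated by more than |u|+1 positions and in particular do not overlap. -/
open scoped BigOperators

variable {α : Type*}

lemma length_joinRep (v : List α) (k : ℕ) :
    ((List.replicate k v).flatten).length = k * v.length := by
  induction k with
  | zero => simp
  | succ k ih => rw [List.replicate_succ, List.flatten_cons, List.length_append, ih]; ring

lemma getElem?_joinRep (v : List α) (hv : 0 < v.length) :
    ∀ k p, p < k * v.length →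
      ((List.replicate k v).flatten)[p]? = v[p % v.length]? := by
  intro k
  induction k with
  | zero => intro p hp; omega
  | succ k ih =>
    intro p hp
    have hsm : (k + 1) * v.length = k * v.length + v.length := by ring
    rw [List.replicate_succ, List.flatten_cons]
    rcases lt_or_ge p v.length with h | h
    · rw [List.getElem?_append, if_pos h, Nat.mod_eq_of_lt h]
    · rw [List.getElem?_append, if_neg (by omega), ih _ (by omega), Nat.mod_eq_sub_mod h]

lemma Subword_getElem? (w : ℕ → α) (a b n : ℕ) :
    (Subword w a b)[n]? = if n < b + 1 - a then some (w (a + n)) else none := by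
  rcases lt_or_ge n (b + 1 - a) with h | h
  · simp [Subword, List.getElem?_map, List.getElem?_range h, h]
  · rw [if_neg (by omega), List.getElem?_eq_none]
    simpa [Subword] using h

lemma Subword_length (w : ℕ → α) (a b : ℕ) : (Subword w a b).length = b + 1 - a := by
  simp [Subword]

lemma pattern_of_mem (v : List α) (hv : 0 < v.length) (t : List α)
    (h : ∃ k, t <:+: (List.replicate k v).flatten) :
    ∃ s, ∀ n, n < t.length → t[n]? = v[(s + n) % v.length]? := by
  obtain ⟨k, pre, suf, hps⟩ := h
  refine ⟨pre.length, fun n hn => ?_⟩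
  have hlen : pre.length + t.length + suf.length = k * v.length := by
    have h' := congrArg List.length hps
    simp [List.length_append, length_joinRep v k] at h'
    omega
  have h1 : ((List.replicate k v).flatten)[pre.length + n]? = t[n]? := by
    rw [← hps, List.getElem?_append, if_pos (by simp [List.length_append]; omega),
      List.getElem?_append, if_neg (by omega)]
    congr 1
    omega
  rw [← h1, getElem?_joinRep v hv k _ (by omega)]

lemma mem_of_pattern (v : List α) (hv : 0 < v.length) (t : List α) (s : ℕ)
    (h : ∀ n, n < t.length → t[n]? = v[(s + n) % v.length]?) :
    ∃ k, t <:+: (List.replicate k v).flatten := by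
  set r := s % v.length with hr
  set k := r + t.length + 1 with hk
  have hrk : r + t.length ≤ k * v.length := by
    have : k ≤ k * v.length := Nat.le_mul_of_pos_right k hv
    omega
  refine ⟨k, ?_⟩
  have heq : t = (((List.replicate k v).flatten).drop r).take t.length := by
    apply List.ext_getElem?
    intro n
    rcases lt_or_ge n t.length with hn | hn
    · rw [List.getElem?_take, if_pos hn, List.getElem?_drop,
        getElem?_joinRep v hv k _ (by omega), h n hn]
      congr 1
      rw [hr, Nat.mod_add_mod]
    · have hlen2 : ((((List.replicate k v).flatten).drop r).take t.length).length ≤ n := by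
        simp [List.length_take, List.length_drop, length_joinRep]
        omega
      rw [List.getElem?_eq_none_iff.mpr hn, List.getElem?_eq_none_iff.mpr hlen2]
  rw [heq]
  exact (List.take_prefix _ _).isInfix.trans (List.drop_suffix _ _).isInfix

lemma Subword_infix (w : ℕ → α) {a b a' b' : ℕ} (h1 : a ≤ a') (h2 : b' ≤ b) :
    Subword w a' b' <:+: Subword w a b := by
  have heq : Subword w a' b' = ((Subword w a b).drop (a' - a)).take (b' + 1 - a') := by
    apply List.ext_getElem?
    intro n
    rcases lt_or_ge n (b' + 1 - a') with hn | hn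
    · rw [Subword_getElem?, if_pos hn, List.getElem?_take, if_pos hn, List.getElem?_drop,
        Subword_getElem?, if_pos (by omega)]
      congr 2
      omega
    · have ha : (Subword w a' b').length ≤ n := by rw [Subword_length]; omega
      have hb : (((Subword w a b).drop (a' - a)).take (b' + 1 - a')).length ≤ n := by
        simp [List.length_take, List.length_drop, Subword_length]
        omega
      rw [List.getElem?_eq_none_iff.mpr ha, List.getElem?_eq_none_iff.mpr hb]
  rw [heq]
  exact (List.take_prefix _ _).isInfix.trans (List.drop_suffix _ _).isInfix

lemma extend_right (w : ℕ → α) (L : ℕ) (hL : 0 < L) (v1 v2 : List α)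
    (hv1 : v1.length = L) (hv2 : v2.length = L)
    (a1 b1 a2 b2 : ℕ)
    (ha1 : a1 + L ≤ b1 + 1) (ha2 : a2 + L ≤ b1 + 1) (hb2 : b1 + 1 ≤ b2)
    (h1 : ∃ k, Subword w a1 b1 <:+: (List.replicate k v1).flatten)
    (h2 : ∃ k, Subword w a2 b2 <:+: (List.replicate k v2).flatten) :
    ∃ k, Subword w a1 (b1 + 1) <:+: (List.replicate k v1).flatten := by
  obtain ⟨s1, hp1⟩ := pattern_of_mem v1 (by omega) _ h1
  obtain ⟨s2, hp2⟩ := pattern_of_mem v2 (by omega) _ h2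
  rw [Subword_length] at hp1 hp2
  -- key periodicity: w (b1 + 1) = w (b1 + 1 - L)
  have key : w (b1 + 1) = w (b1 + 1 - L) := by
    have e1 := hp2 (b1 + 1 - a2) (by omega)
    have e2 := hp2 (b1 + 1 - L - a2) (by omega)
    rw [Subword_getElem?, if_pos (by omega)] at e1
    rw [Subword_getElem?, if_pos (by omega)] at e2
    have hidx : (s2 + (b1 + 1 - a2)) % v2.length = (s2 + (b1 + 1 - L - a2)) % v2.length := by
      have hq : s2 + (b1 + 1 - a2) = s2 + (b1 + 1 - L - a2) + v2.length := by omega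
      rw [hq, Nat.add_mod_right]
    rw [hidx, ← e2] at e1
    have ea : a2 + (b1 + 1 - a2) = b1 + 1 := by omega
    have eb : a2 + (b1 + 1 - L - a2) = b1 + 1 - L := by omega
    rw [ea, eb] at e1
    exact Option.some_injective _ e1
  apply mem_of_pattern v1 (by omega) _ s1
  intro n hn
  rw [Subword_length] at hn
  rw [Subword_getElem?, if_pos (by omega)]
  rcases lt_or_ge n (b1 + 1 - a1) with h | h
  · rw [← hp1 n h, Subword_getElem?, if_pos h]
  · -- n = b1 + 1 - a1
    have hn' : n = b1 + 1 - a1 := by omega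
    have e3 := hp1 (b1 + 1 - L - a1) (by omega)
    rw [Subword_getElem?, if_pos (by omega)] at e3
    have eb : a1 + (b1 + 1 - L - a1) = b1 + 1 - L := by omega
    rw [eb] at e3
    have hidx : (s1 + n) % v1.length = (s1 + (b1 + 1 - L - a1)) % v1.length := by
      have hq : s1 + n = s1 + (b1 + 1 - L - a1) + v1.length := by omega
      rw [hq, Nat.add_mod_right]
    have han : a1 + n = b1 + 1 := by omega
    rw [han, key, hidx]
    exact e3

/-- distinct runs are separated by more than `|u|+1` positions. -/
theorem runs_separated {α : Type*} (γ : ℕ) (hγ : 3 ≤ γ) (w : ℕ → α) (u : List α)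
    (hu : u ≠ []) (hprim : Primitive u) (hfac : IsFactorI w u)
    (i1 j1 i2 j2 : ℕ) (h1 : IsRun γ w u i1 j1) (h2 : IsRun γ w u i2 j2)
    (hlt : i1 < i2) : j1 + u.length + 1 < i2 := by
  obtain ⟨hij1, hlen1, hi1, hp1, hl1, hr1⟩ := h1
  obtain ⟨hij2, hlen2, hi2, hp2, hl2, hr2⟩ := h2
  by_contra hc
  push_neg at hc
  have hL : 0 < u.length := List.length_pos_iff.mpr hu
  rcases le_or_gt j2 j1 with hj | hj
  · -- run 2's left extension is contained in run 1's window
    apply hl2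
    have hinf : Subword w (i2 - u.length - 1) (j2 + u.length) <:+:
        Subword w (i1 - u.length) (j1 + u.length) :=
      Subword_infix w (by omega) (by omega)
    rcases hp1 with ⟨k, hk⟩ | ⟨k, hk⟩
    · exact Or.inl ⟨k, hinf.trans hk⟩
    · exact Or.inr ⟨k, hinf.trans hk⟩
  · -- run 1's window extends one step to the right, using run 2's periodicity
    apply hr1
    have h2' : ∃ v2 : List α, v2.length = u.length ∧
        ∃ k, Subword w (i2 - u.length) (j2 + u.length) <:+: (List.replicate k v2).flatten := by
      rcases hp2 with ⟨k, hk⟩ | ⟨k, hk⟩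
      · exact ⟨u, rfl, k, hk⟩
      · exact ⟨u.reverse, by simp, k, hk⟩
    obtain ⟨v2, hv2, hk2⟩ := h2'
    rcases hp1 with ⟨k, hk⟩ | ⟨k, hk⟩
    · exact Or.inl (extend_right w u.length hL u v2 rfl hv2
        (i1 - u.length) (j1 + u.length) (i2 - u.length) (j2 + u.length)
        (by omega) (by omega) (by omega) ⟨k, hk⟩ hk2)
    · exact Or.inr (extend_right w u.length hL u.reverse v2 (by simp) hv2
        (i1 - u.length) (j1 + u.length) (i2 - u.length) (j2 + u.length)
        (by omega) (by omega) (by omega) ⟨k, hk⟩ hk2)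
end

section
/- Let φ: ℕ≥1 → ℝ be a strictly increasing function with φ(n) → ∞. Then there exists an infinite non-ultimately-periodic binary word w such that limsup_{n→∞} PPL_w(n)/φ(n) ≤ 1, where PPL_w(n) is the palindromic length of the prefix of w of length n. In particular, the word w = 0^{⌈φ⁻¹(2)⌉} 1 0^{⌈φ⁻¹(4)⌉} 1 0^{⌈φ⁻¹(6)⌉} 1 ⋯ has this property. -/
open scoped BigOperators

variable {α : Type*}

namespace SlowAux

/-- block k : `0^(a k) ++ [1]` -/
def blk (a : ℕ → ℕ) (k : ℕ) : List (Fin 2) := List.replicate (a k) 0 ++ [1]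

def pre (a : ℕ → ℕ) : ℕ → List (Fin 2)
  | 0 => []
  | k + 1 => pre a k ++ blk a k

lemma len_succ (a : ℕ → ℕ) (k : ℕ) :
    (pre a (k+1)).length = (pre a k).length + (a k + 1) := by
  simp [pre, blk]

lemma len_ge (a : ℕ → ℕ) (k : ℕ) : k ≤ (pre a k).length := by
  induction k with
  | zero => simp [pre]
  | succ k ih => rw [len_succ]; omega

lemma pre_prefix (a : ℕ → ℕ) {k m : ℕ} (h : k ≤ m) : pre a k <+: pre a m := by
  induction m with
  | zero => simp_all
  | succ m ih =>
    rcases Nat.lt_or_ge k (m+1) with h' | h'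
    · exact (ih (by omega)).trans (by simp [pre])
    · have : k = m + 1 := by omega
      subst this; exact List.prefix_rfl

/-- the infinite word, 0-indexed -/
def fw (a : ℕ → ℕ) (i : ℕ) : Fin 2 := (pre a (i+1)).getD i 0

lemma fw_eq (a : ℕ → ℕ) {K i : ℕ} (h : i < (pre a K).length) :
    fw a i = (pre a K)[i] := by
  rcases le_total (i+1) K with hK | hK
  · have hi : i < (pre a (i+1)).length := lt_of_lt_of_le (Nat.lt_succ_self i) (len_ge a (i+1))
    rw [fw, List.getD_eq_getElem _ _ hi]
    exact (pre_prefix a hK).getElem hi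
  · have hi : i < (pre a (i+1)).length := lt_of_lt_of_le (Nat.lt_succ_self i) (len_ge a (i+1))
    rw [fw, List.getD_eq_getElem _ _ hi]
    exact ((pre_prefix a hK).getElem h).symm

lemma prefix_eq (a : ℕ → ℕ) {K n : ℕ} (h : n ≤ (pre a K).length) :
    (List.range n).map (fw a) = (pre a K).take n := by
  apply List.ext_getElem
  · simp [h]
  · intro i h1 h2
    simp only [List.getElem_map, List.getElem_range, List.getElem_take]
    exact fw_eq a (by simp at h1; omega)



def palList (a : ℕ → ℕ) : ℕ → List (List (Fin 2))
  | 0 => []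
  | k + 1 => palList a k ++ [List.replicate (a k) 0, [1]]

lemma join_palList (a : ℕ → ℕ) (k : ℕ) : (palList a k).flatten = pre a k := by
  induction k with
  | zero => rfl
  | succ k ih => simp [palList, pre, blk, ih]

lemma length_palList (a : ℕ → ℕ) (k : ℕ) : (palList a k).length = 2 * k := by
  induction k with
  | zero => rfl
  | succ k ih => simp [palList, ih]; ring

lemma mem_palList (a : ℕ → ℕ) (ha : ∀ k, 1 ≤ a k) (k : ℕ) :
    ∀ p ∈ palList a k, p ≠ [] ∧ p.reverse = p := by
  induction k with
  | zero => simp [palList]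
  | succ k ih =>
    intro p hp
    simp only [palList, List.mem_append, List.mem_cons] at hp
    rcases hp with hp | hp | hp | hp
    · exact ih p hp
    · subst hp
      refine ⟨by have := ha k; simp; omega, List.reverse_replicate⟩
    · subst hp; exact ⟨by simp, by simp⟩
    · simp at hp

lemma PL_le {α : Type*} {v : List α} {ps : List (List α)} (h : ps.flatten = v)
    (hp : ∀ p ∈ ps, p ≠ [] ∧ p.reverse = p) : PL v ≤ ps.length :=
  Nat.sInf_le ⟨ps, h, rfl, hp⟩

lemma PL_bound (a : ℕ → ℕ) (ha : ∀ k, 1 ≤ a k) (k m : ℕ) :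
    PL (pre a k ++ List.replicate m (0 : Fin 2)) ≤ 2 * k + 1 := by
  rcases Nat.eq_zero_or_pos m with rfl | hm
  · calc PL (pre a k ++ List.replicate 0 (0 : Fin 2)) ≤ (palList a k).length :=
          PL_le (by simp [join_palList]) (mem_palList a ha k)
      _ ≤ 2 * k + 1 := by rw [length_palList]; omega
  · calc PL (pre a k ++ List.replicate m (0 : Fin 2))
        ≤ (palList a k ++ [List.replicate m (0 : Fin 2)]).length := by
          refine PL_le (by simp [join_palList]) ?_
          intro p hp
          simp only [List.mem_append, List.mem_cons] at hp
          rcases hp with hp | hp | hp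
          · exact mem_palList a ha k p hp
          · subst hp
            exact ⟨by have := ha k; simp; omega, List.reverse_replicate⟩
          · simp at hp
      _ = 2 * k + 1 := by simp [length_palList]

/-- Decomposition of any prefix. -/
lemma prefix_decomp (a : ℕ → ℕ) (n : ℕ) :
    ∃ k m, (List.range n).map (fw a) = pre a k ++ List.replicate m (0 : Fin 2) ∧
      (pre a k).length ≤ n := by
  have hex : ∃ k, n < (pre a (k+1)).length :=
    ⟨n, lt_of_lt_of_le (Nat.lt_succ_self n) (len_ge a (n+1))⟩
  set k := Nat.find hex with hk
  have h1 : n < (pre a (k+1)).length := Nat.find_spec hex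
  have h0 : (pre a k).length ≤ n := by
    rcases Nat.eq_zero_or_pos k with h | h
    · rw [h]; simp [pre]
    · have := Nat.find_min hex (m := k - 1) (by omega)
      have hkk : k - 1 + 1 = k := by omega
      rw [hkk] at this; omega
  refine ⟨k, n - (pre a k).length, ?_, h0⟩
  rw [prefix_eq a (le_of_lt h1)]
  have hblk : n - (pre a k).length ≤ a k := by
    have := len_succ a k; omega
  simp only [pre]
  rw [List.take_append, List.take_of_length_le h0, blk,
    List.take_append_of_le_length (by simpa using hblk), List.take_replicate]
  congr 2
  omega

/-- Letters: positions within block k (0-indexed) -/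
lemma fw_zero (a : ℕ → ℕ) (k t : ℕ) (ht : t < a k) :
    fw a ((pre a k).length + t) = 0 := by
  have hlen : (pre a k).length + t < (pre a (k+1)).length := by
    have := len_succ a k; omega
  rw [fw_eq a hlen]
  simp only [pre]
  rw [List.getElem_append_right (by omega)]
  simp only [Nat.add_sub_cancel_left, blk]
  rw [List.getElem_append_left (by simpa using ht)]
  simp

lemma fw_one (a : ℕ → ℕ) (k : ℕ) :
    fw a ((pre a k).length + a k) = 1 := by
  have hlen : (pre a k).length + a k < (pre a (k+1)).length := by
    have := len_succ a k; omega
  rw [fw_eq a hlen]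
  simp only [pre]
  rw [List.getElem_append_right (by omega)]
  simp only [Nat.add_sub_cancel_left, blk]
  rw [List.getElem_append_right (by simp)]
  simp

end SlowAux

/-- palindromic length of prefixes can grow arbitrarily slowly for a
non-ultimately periodic binary word. -/
theorem slow_prefix_palindromic_length (φ : ℕ → ℝ) (hmono : StrictMono φ)
    (htop : Filter.Tendsto φ Filter.atTop Filter.atTop) :
    ∃ w : ℕ → Fin 2, ¬ UltimatelyPeriodic w ∧
      Filter.limsup
        (fun n => (PL ((List.range n).map fun i => w (1 + i)) : ℝ) / φ n)
        Filter.atTop ≤ 1 := by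
  classical
  have hex : ∀ k : ℕ, ∃ n : ℕ, k + 1 ≤ n ∧ (2 * k + 5 : ℝ) ≤ φ n := by
    intro k
    obtain ⟨N, hN⟩ := Filter.eventually_atTop.mp
      (htop.eventually_ge_atTop (2 * k + 5 : ℝ))
    exact ⟨max N (k + 1), le_max_right _ _, hN _ (le_max_left _ _)⟩
  choose a ha1 ha2 using hex
  have ha : ∀ k, 1 ≤ a k := fun k => le_trans (by omega) (ha1 k)
  refine ⟨fun n => SlowAux.fw a (n - 1), ?_, ?_⟩
  · rintro ⟨p, N, hp, hper⟩
    set K := max N p with hK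
    set L := (SlowAux.pre a (K + 1)).length with hL
    have hls : (SlowAux.pre a (K + 1)).length = (SlowAux.pre a K).length + (a K + 1) :=
      SlowAux.len_succ a K
    have hL1 : K + 1 ≤ L := SlowAux.len_ge a (K + 1)
    have h1 : SlowAux.fw a (L - 1) = 1 := by
      have e : L - 1 = (SlowAux.pre a K).length + a K := by omega
      rw [e]; exact SlowAux.fw_one a K
    have h0 : SlowAux.fw a (L - 1 + p) = 0 := by
      have hpa : p - 1 < a (K + 1) := by
        have := ha1 (K + 1)
        have : p ≤ K := le_max_right N p
        omega
      have e : L - 1 + p = (SlowAux.pre a (K + 1)).length + (p - 1) := by omega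
      rw [e]; exact SlowAux.fw_zero a (K + 1) (p - 1) hpa
    have hNL : N ≤ L := le_trans (le_trans (le_max_left N p) (by omega)) hL1
    have hper' := hper L hNL
    simp only at hper'
    have e2 : L + p - 1 = L - 1 + p := by omega
    rw [e2, h0, h1] at hper'
    exact absurd hper' (by decide)
  · have hev : ∀ᶠ n in Filter.atTop,
        (PL ((List.range n).map fun i => SlowAux.fw a (1 + i - 1)) : ℝ) / φ n ≤ 1 := by
      filter_upwards [htop.eventually_ge_atTop 1] with n hn
      have hφ : (0 : ℝ) < φ n := lt_of_lt_of_le one_pos hn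
      rw [div_le_one hφ]
      have hfe : ((List.range n).map fun i => SlowAux.fw a (1 + i - 1))
          = (List.range n).map (SlowAux.fw a) := by
        apply List.map_congr_left
        intro i _
        congr 1
        omega
      rw [hfe]
      obtain ⟨k, m, hdec, hlen⟩ := SlowAux.prefix_decomp a n
      rw [hdec]
      have hPL := SlowAux.PL_bound a ha k m
      rcases Nat.eq_zero_or_pos k with rfl | hk
      · calc (PL (SlowAux.pre a 0 ++ List.replicate m (0 : Fin 2)) : ℝ)
            ≤ (2 * 0 + 1 : ℕ) := Nat.cast_le.mpr hPL
          _ = 1 := by norm_num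
          _ ≤ φ n := hn
      · have hak : a (k - 1) ≤ n := by
          have h1 : (SlowAux.pre a (k - 1 + 1)).length
              = (SlowAux.pre a (k - 1)).length + (a (k - 1) + 1) := SlowAux.len_succ a (k - 1)
          have h2 : k - 1 + 1 = k := by omega
          rw [h2] at h1
          omega
        have hφn : φ (a (k - 1)) ≤ φ n := hmono.monotone hak
        have h2 := ha2 (k - 1)
        have hcast : ((k : ℝ) - 1) = ((k - 1 : ℕ) : ℝ) := by
          rw [Nat.cast_sub hk]; norm_num
        calc (PL (SlowAux.pre a k ++ List.replicate m (0 : Fin 2)) : ℝ)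
            ≤ ((2 * k + 1 : ℕ) : ℝ) := Nat.cast_le.mpr hPL
          _ ≤ (2 * ((k - 1 : ℕ) : ℝ) + 5 : ℝ) := by
              rw [← hcast]; push_cast; linarith
          _ ≤ φ (a (k - 1)) := h2
          _ ≤ φ n := hφn
    have hge : ∀ᶠ n in Filter.atTop, (0 : ℝ) ≤
        (PL ((List.range n).map fun i => SlowAux.fw a (1 + i - 1)) : ℝ) / φ n := by
      filter_upwards [htop.eventually_ge_atTop 1] with n hn
      exact div_nonneg (Nat.cast_nonneg _) (le_trans zero_le_one hn)
    exact Filter.limsup_le_of_le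
      (Filter.isCoboundedUnder_le_of_eventually_le _ hge) hev
end

section
/- Let w be an infinite non-ultimately periodic word, u ∈ Π_γ(w) primitive, and (w⃗, z⃗, d⃗) = factrz(w,u) its run factorization w = w1 z1^{d1} w2 z2^{d2} ⋯. For every k ≥ 1 the word w_k satisfies |w_k| > |u|. -/
open scoped BigOperators

variable {α : Type*}

namespace InterRunAux

lemma getElem_idx_congr (l : List α) {i j : ℕ} (hij : i = j) (h : i < l.length) :
    l[i] = l[j]'(hij ▸ h) := by subst hij; rfl

lemma length_join_replicate (K : ℕ) (v : List α) :
    ((List.replicate K v).flatten).length = K * v.length := by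
  induction K with
  | zero => simp
  | succ n ih => simp [List.replicate_succ, ih, Nat.succ_mul]; omega

lemma getElem_join_replicate (v : List α) (hv : v ≠ []) (K i : ℕ)
    (h : i < ((List.replicate K v).flatten).length) :
    ((List.replicate K v).flatten)[i] =
      v[i % v.length]'(Nat.mod_lt _ (List.length_pos_iff.mpr hv)) := by
  induction K generalizing i with
  | zero => simp at h
  | succ n ih =>
    have he : (List.replicate (n + 1) v).flatten = v ++ (List.replicate n v).flatten := by
      simp [List.replicate_succ]
    rw [List.getElem_of_eq he h]
    have h' : i < (v ++ (List.replicate n v).flatten).length := by rw [← he]; exact h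
    by_cases hi : i < v.length
    · rw [List.getElem_append_left hi]
      exact getElem_idx_congr v (Nat.mod_eq_of_lt hi).symm hi
    · push_neg at hi
      have hlt : i - v.length < (List.replicate n v).flatten.length := by
        rw [List.length_append] at h'; omega
      rw [List.getElem_append_right hi, ih _ hlt]
      exact getElem_idx_congr v (Nat.mod_eq_sub_mod hi).symm _

lemma getElem_of_infix {t l : List α} (h : t <:+: l) :
    ∃ s : ℕ, s + t.length ≤ l.length ∧
      ∀ i (hi : i < t.length) (h2 : s + i < l.length), t[i] = l[s + i] := by
  obtain ⟨s, t', rfl⟩ := h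
  refine ⟨s.length, by simp, fun i hi h2 => ?_⟩
  have he : s ++ t ++ t' = s ++ (t ++ t') := by rw [List.append_assoc]
  rw [List.getElem_of_eq he h2, List.getElem_append_right (Nat.le_add_right _ _),
    getElem_idx_congr (t ++ t') (show s.length + i - s.length = i by omega)]
  exact (List.getElem_append_left hi).symm

lemma subword_length (w : ℕ → α) (a b : ℕ) : (Subword w a b).length = b + 1 - a := by
  simp [Subword]

lemma subword_getElem (w : ℕ → α) (a b n : ℕ) (h : n < (Subword w a b).length) :
    (Subword w a b)[n] = w (a + n) := by
  simp [Subword]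

lemma period_of_join_infix {w : ℕ → α} {v : List α} (hv : v ≠ []) {a b k : ℕ}
    (h : Subword w a b <:+: (List.replicate k v).flatten) :
    ∀ m, a ≤ m → m + v.length ≤ b → w (m + v.length) = w m := by
  intro m hm hmb
  set p := v.length with hp
  have hp0 : 0 < p := List.length_pos_iff.mpr hv
  obtain ⟨s, hs, hget⟩ := getElem_of_infix h
  rw [subword_length] at hs
  have hsl : (Subword w a b).length = b + 1 - a := subword_length w a b
  have h1 : m - a + p < (Subword w a b).length := by omega
  have h2 : m - a < (Subword w a b).length := by omega
  have j1 : s + (m - a + p) < (List.replicate k v).flatten.length := by omega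
  have j2 : s + (m - a) < (List.replicate k v).flatten.length := by omega
  have e1 : ((List.replicate k v).flatten)[s + (m - a + p)] = w (m + p) := by
    rw [← hget _ h1 j1, subword_getElem w a b _ h1]
    congr 1; omega
  have e2 : ((List.replicate k v).flatten)[s + (m - a)] = w m := by
    rw [← hget _ h2 j2, subword_getElem w a b _ h2]
    congr 1; omega
  have hper : ((List.replicate k v).flatten)[s + (m - a + p)] =
      ((List.replicate k v).flatten)[s + (m - a)] := by
    rw [getElem_join_replicate v hv _ _ j1, getElem_join_replicate v hv _ _ j2]
    exact getElem_idx_congr v (by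
      have : s + (m - a + p) = s + (m - a) + p := by omega
      rw [this, Nat.add_mod_right]) _
  rw [← e1, ← e2, hper]

lemma subword_infix_subword (w : ℕ → α) {a b a' b' : ℕ} (ha : a ≤ a') (hb : b' ≤ b) :
    Subword w a' b' <:+: Subword w a b := by
  by_cases hab : a' ≤ b' + 1
  · have heq : Subword w a' b' = ((Subword w a b).drop (a' - a)).take (b' + 1 - a') := by
      apply List.ext_getElem
      · simp [subword_length]; omega
      · intro n h1 h2
        rw [List.getElem_take, List.getElem_drop]
        rw [subword_getElem w a' b' n h1, subword_getElem w a b _ (by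
          simp only [subword_length] at h1 ⊢; omega)]
        congr 1
        rw [subword_length] at h1
        omega
    rw [heq]
    exact (((Subword w a b).drop (a' - a)).take_prefix _).isInfix.trans
      ((Subword w a b).drop_suffix _).isInfix
  · have : b' + 1 - a' = 0 := by omega
    simp [Subword, this]

lemma powfactor_mono {u s t : List α} (h : t <:+: s) : IsPowFactor u s → IsPowFactor u t := by
  rintro (⟨k, hk⟩ | ⟨k, hk⟩)
  · exact Or.inl ⟨k, h.trans hk⟩
  · exact Or.inr ⟨k, h.trans hk⟩

lemma extend {w : ℕ → α} {v : List α} (hv : v ≠ []) {a b1 b2 k : ℕ}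
    (hb : b1 ≤ b2) (hlen1 : a + v.length ≤ b1 + 1)
    (hinf : Subword w a b1 <:+: (List.replicate k v).flatten)
    (hper : ∀ m, a ≤ m → m + v.length ≤ b2 → w (m + v.length) = w m) :
    ∃ K, Subword w a b2 <:+: (List.replicate K v).flatten := by
  have hp0 : 0 < v.length := List.length_pos_iff.mpr hv
  obtain ⟨s, hs, hget⟩ := getElem_of_infix hinf
  rw [subword_length, length_join_replicate] at hs
  refine ⟨k + (b2 - b1), ?_⟩
  set K := k + (b2 - b1) with hK
  have hlenK : ((List.replicate K v).flatten).length = K * v.length := length_join_replicate _ _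
  have hlenk : ((List.replicate k v).flatten).length = k * v.length := length_join_replicate _ _
  have hmul : K * v.length = k * v.length + (b2 - b1) * v.length := by rw [hK, Nat.add_mul]
  have hmul2 : b2 - b1 ≤ (b2 - b1) * v.length := Nat.le_mul_of_pos_right _ hp0
  have hsle : s + (b2 + 1 - a) ≤ K * v.length := by omega
  have key : ∀ n, n < b2 + 1 - a →
      ∀ (hj : s + n < (List.replicate K v).flatten.length),
      ((List.replicate K v).flatten)[s + n] = w (a + n) := by
    intro n
    induction n using Nat.strong_induction_on with
    | _ n ih =>
      intro hn hj
      by_cases hcase : n < b1 + 1 - a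
      · have jk : s + n < (List.replicate k v).flatten.length := by omega
        have hv1 : ((List.replicate K v).flatten)[s + n] =
            ((List.replicate k v).flatten)[s + n] :=
          (getElem_join_replicate v hv _ _ hj).trans
            (getElem_join_replicate v hv _ _ jk).symm
        have hn1 : n < (Subword w a b1).length := by rw [subword_length]; omega
        rw [hv1, ← hget n hn1 jk, subword_getElem w a b1 n hn1]
      · push_neg at hcase
        have hpn : v.length ≤ n := by omega
        have hper' := hper (a + (n - v.length)) (by omega) (by omega)
        have e : a + (n - v.length) + v.length = a + n := by omega
        rw [e] at hper'
        have hj' : s + (n - v.length) < (List.replicate K v).flatten.length := by omega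
        have hih := ih (n - v.length) (by omega) (by omega) hj'
        have hjeq : ((List.replicate K v).flatten)[s + n] =
            ((List.replicate K v).flatten)[s + (n - v.length)] := by
          rw [getElem_join_replicate v hv _ _ hj, getElem_join_replicate v hv _ _ hj']
          exact getElem_idx_congr v (by
            have hsp : s + n = s + (n - v.length) + v.length := by omega
            rw [hsp, Nat.add_mod_right]) _
        rw [hjeq, hih, ← hper']
  have heq : Subword w a b2 = (((List.replicate K v).flatten).drop s).take (b2 + 1 - a) := by
    apply List.ext_getElem
    · simp [subword_length, hlenK]; omega
    · intro n h1 h2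
      rw [List.getElem_take, List.getElem_drop]
      rw [subword_length] at h1
      rw [subword_getElem w a b2 n (by rw [subword_length]; omega), key n h1 (by omega)]
  rw [heq]
  exact ((((List.replicate K v).flatten).drop s).take_prefix _).isInfix.trans
    (((List.replicate K v).flatten).drop_suffix _).isInfix

end InterRunAux

open InterRunAux in
/-- every inter-run factor of the run factorization is longer than `u`. -/
theorem interrun_factor_long {α : Type*} (γ : ℕ) (hγ : 3 ≤ γ) (w : ℕ → α)
    (u : List α) (hw : ¬ UltimatelyPeriodic w) (hu : InPi γ w u)
    (I J : ℕ → ℕ) (W Z : ℕ → List α) (D : ℕ → ℚ)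
    (hf : IsFactrz γ w u I J W Z D) :
    ∀ k, 1 ≤ k → u.length < (W k).length := by
  intro k hk
  have hu0 : u ≠ [] := hu.1.1
  have hp0 : 0 < u.length := List.length_pos_iff.mpr hu0
  obtain ⟨m, rfl⟩ : ∃ m, k = m + 1 := ⟨k - 1, by omega⟩
  have r2 := hf.run (m + 1) (by omega)
  obtain ⟨hij2, -, hi2, hpow2, hnl2, hnr2⟩ := r2
  have hWlen : (W (m + 1)).length = (I (m + 1) - 1) + 1 - (J m + 1) := by
    rw [hf.wdef (m + 1) (by omega)]
    simp [subword_length]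
  by_cases hm : m = 0
  · subst hm
    rw [hWlen, hf.j0]
    omega
  have hm1 : 1 ≤ m := by omega
  have r1 := hf.run m hm1
  obtain ⟨hij1, -, hi1, hpow1, hnl1, hnr1⟩ := r1
  have hmono := hf.mono m hm1
  by_contra hcon
  push_neg at hcon
  have hcon' : I (m + 1) ≤ J m + u.length + 1 := by omega
  by_cases hJ : J (m + 1) ≤ J m
  · exact hnl2 (powfactor_mono
      (subword_infix_subword w (by omega) (by omega)) hpow1)
  push_neg at hJ
  have main : ∀ v : List α, v.length = u.length → v ≠ [] →
      (∃ k1, Subword w (I m - u.length) (J m + u.length) <:+: (List.replicate k1 v).flatten) →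
      ∃ K, Subword w (I m - u.length) (J (m + 1) + u.length) <:+:
        (List.replicate K v).flatten := by
    rintro v hvlen hvne ⟨k1, hk1⟩
    have per1 := period_of_join_infix hvne hk1
    have per2 : ∀ n, I (m + 1) - u.length ≤ n → n + u.length ≤ J (m + 1) + u.length →
        w (n + u.length) = w n := by
      rcases hpow2 with ⟨k2, hk2⟩ | ⟨k2, hk2⟩
      · exact fun n h1 h2 => period_of_join_infix hu0 hk2 n h1 h2
      · intro n h1 h2
        have hrne : u.reverse ≠ [] := by simpa using hu0
        have := period_of_join_infix hrne hk2 n h1 (by simpa using h2)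
        simpa using this
    have permerge : ∀ n, I m - u.length ≤ n → n + u.length ≤ J (m + 1) + u.length →
        w (n + u.length) = w n := by
      intro n h1 h2
      by_cases hc : n + u.length ≤ J m + u.length
      · have := per1 n h1 (by rw [hvlen]; exact hc)
        rwa [hvlen] at this
      · exact per2 n (by omega) h2
    exact extend hvne (by omega) (by rw [hvlen]; omega) hk1
      (by rw [hvlen]; exact permerge)
  have hsub : Subword w (I m - u.length) (J m + u.length + 1) <:+:
      Subword w (I m - u.length) (J (m + 1) + u.length) :=
    subword_infix_subword w le_rfl (by omega)
  rcases hpow1 with ⟨k1, hk1⟩ | ⟨k1, hk1⟩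
  · obtain ⟨K, hK⟩ := main u rfl hu0 ⟨k1, hk1⟩
    exact hnr1 (powfactor_mono hsub (Or.inl ⟨K, hK⟩))
  · obtain ⟨K, hK⟩ := main u.reverse (by simp) (by simpa using hu0) ⟨k1, hk1⟩
    exact hnr1 (powfactor_mono hsub (Or.inr ⟨K, hK⟩))
end

section
/- Let w be an infinite non-ultimately periodic word and u ∈ Π_γ(w). If i ≤ j, w[i,j] is a palindrome, (m1,m2) is a u-run with i + |u| < m1 and m2 + |u| < j, (m3,m4) is its mirror in [i,j], k = min(m1, m3) and k̄ = i + j - k, then (k - |u|, k̄ + |u|) is a centered standard palindrome of w[i,j]. -/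
open scoped BigOperators

variable {α : Type*}

namespace Run13
variable {α : Type*}

def PowF (v t : List α) : Prop := ∃ k, t <:+: (List.replicate k v).flatten

def Aligned (v : List α) (w : ℕ → α) (r a b : ℕ) : Prop :=
  ∀ m, a ≤ m → m ≤ b → v[(r + m) % v.length]? = some (w m)

lemma aligned_mono {v : List α} {w : ℕ → α} {r a b a' b' : ℕ}
    (h : Aligned v w r a b) (ha : a ≤ a') (hb : b' ≤ b) : Aligned v w r a' b' :=
  fun m h1 h2 => h m (ha.trans h1) (h2.trans hb)

lemma subword_getElem? (w : ℕ → α) (a b p : ℕ) :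
    (Subword w a b)[p]? = if p < b + 1 - a then some (w (a + p)) else none := by
  unfold Subword
  rw [List.getElem?_map]
  by_cases h : p < b + 1 - a
  · rw [List.getElem?_range h]; simp [h]
  · rw [List.getElem?_eq_none (by simpa using h)]; simp [h]

lemma subword_length (w : ℕ → α) (a b : ℕ) : (Subword w a b).length = b + 1 - a := by
  simp [Subword]

lemma jrep (v : List α) : ∀ (k p : ℕ), p < k * v.length →
    ((List.replicate k v).flatten)[p]? = v[p % v.length]? := by
  intro k
  induction k with
  | zero => intro p hp; omega
  | succ k ih =>
    intro p hp
    rw [List.replicate_succ, List.flatten_cons, List.getElem?_append]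
    by_cases h : p < v.length
    · simp [h, Nat.mod_eq_of_lt h]
    · have hL : 0 < v.length := by by_contra h0; simp at h0; simp [h0] at hp
      have hx : (k + 1) * v.length = k * v.length + v.length := by ring
      simp only [h, if_false]
      rw [ih (p - v.length) (by omega)]
      congr 1
      exact (Nat.mod_eq_sub_mod (by omega)).symm

lemma jrep_length (v : List α) (k : ℕ) : ((List.replicate k v).flatten).length = k * v.length := by
  simp [List.length_flatten]

lemma powF_iff_aligned {v : List α} (hv : v ≠ []) (w : ℕ → α) (a b : ℕ) :
    PowF v (Subword w a b) ↔ ∃ r, Aligned v w r a b := by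
  have hL : 0 < v.length := List.length_pos_iff.mpr hv
  constructor
  · rintro ⟨k, s, t, hst⟩
    refine ⟨s.length + a * (v.length - 1), ?_⟩
    intro m hm1 hm2
    have hlen : (Subword w a b).length = b + 1 - a := subword_length w a b
    have hidx : m - a < (Subword w a b).length := by omega
    have h1 : ((List.replicate k v).flatten)[s.length + (m - a)]? = some (w m) := by
      rw [← hst]
      rw [List.getElem?_append,
        if_pos (by rw [List.length_append]; omega), List.getElem?_append,
        if_neg (by omega)]
      rw [show s.length + (m - a) - s.length = m - a by omega, subword_getElem?,
        if_pos (by omega), show a + (m - a) = m by omega]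
    have hplt : s.length + (m - a) < k * v.length := by
      have := hst ▸ jrep_length v k
      have hl2 : s.length + ((Subword w a b).length + t.length) = k * v.length := by
        simpa [List.length_append] using this
      omega
    rw [jrep v k _ hplt] at h1
    rw [← h1]
    congr 1
    have hde : s.length + a * (v.length - 1) + m = s.length + (m - a) + a * v.length := by
      have h1 : a * v.length = a * (v.length - 1) + a := by
        nth_rewrite 1 [show v.length = (v.length - 1) + 1 by omega]
        ring
      omega
    rw [hde, Nat.add_mul_mod_self_right]
  · rintro ⟨r, hr⟩
    by_cases hab : a ≤ b
    case neg =>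
      refine ⟨0, ?_⟩
      have : Subword w a b = [] := by
        have := subword_length w a b
        cases h : Subword w a b with
        | nil => rfl
        | cons x xs => rw [h] at this; simp at this; omega
      simp [this]
    set r' := (r + a) % v.length with hr'
    refine ⟨(r' + (b + 1 - a)) / v.length + 1, ?_⟩
    set k := (r' + (b + 1 - a)) / v.length + 1 with hk
    have hkL : r' + (b + 1 - a) ≤ k * v.length := by
      have hd := Nat.div_add_mod (r' + (b + 1 - a)) v.length
      have hm := Nat.mod_lt (r' + (b + 1 - a)) hL
      have hql : k * v.length = v.length * ((r' + (b + 1 - a)) / v.length) + v.length := by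
        rw [hk]; ring
      omega
    have heq : Subword w a b = (((List.replicate k v).flatten).drop r').take (b + 1 - a) := by
      apply List.ext_getElem?
      intro p
      rw [subword_getElem?, List.getElem?_take]
      by_cases hp : p < b + 1 - a
      · rw [if_pos hp, if_pos hp, List.getElem?_drop]
        rw [jrep v k _ (by omega)]
        have := hr (a + p) (by omega) (by omega)
        rw [← this]
        congr 1
        rw [hr']
        rw [show r' + p = (r + a) % v.length + p from rfl, Nat.mod_add_mod]
        congr 1
        omega
      · rw [if_neg hp, if_neg hp]
    rw [heq]
    exact ((List.take_prefix _ _).isInfix).trans ((List.drop_suffix _ _).isInfix)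


lemma powF_reverse {v t : List α} : PowF v t ↔ PowF v.reverse t.reverse := by
  constructor
  · rintro ⟨k, hk⟩
    refine ⟨k, ?_⟩
    have : (List.replicate k v).flatten.reverse = (List.replicate k v.reverse).flatten := by
      rw [List.reverse_flatten]
      congr 1
      rw [List.map_replicate, List.reverse_replicate]
    rw [← this, List.reverse_infix]
    exact hk
  · rintro ⟨k, hk⟩
    refine ⟨k, ?_⟩
    have : (List.replicate k v.reverse).flatten.reverse = (List.replicate k v).flatten := by
      rw [List.reverse_flatten]
      congr 1
      rw [List.map_replicate, List.reverse_replicate, List.reverse_reverse]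
    have h2 := List.reverse_infix.mpr hk
    rw [List.reverse_reverse, this] at h2
    exact h2

lemma aligned_transfer {v v' : List α} {w : ℕ → α} {r r' a b a' b' c : ℕ}
    (hv : v ≠ []) (hlen : v'.length = v.length)
    (h1 : Aligned v w r a b) (h2 : Aligned v' w r' a' b')
    (hc1 : a ≤ c) (hc2 : a' ≤ c) (hc3 : c + v.length ≤ b + 1) (hc4 : c + v.length ≤ b' + 1) :
    Aligned v w r a' b' := by
  have hL : 0 < v.length := List.length_pos_iff.mpr hv
  set L := v.length with hLdef
  have h2' : ∀ m, a' ≤ m → m ≤ b' → v'[(r' + m) % L]? = some (w m) := by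
    intro m hm1 hm2
    have := h2 m hm1 hm2
    rwa [hlen] at this
  have key : ∀ q, v[(r + c + q) % L]? = v'[(r' + c + q) % L]? := by
    intro q
    have e1 : (r + c + q) % L = (r + c + q % L) % L := (Nat.add_mod_mod _ _ _).symm
    have e2 : (r' + c + q) % L = (r' + c + q % L) % L := (Nat.add_mod_mod _ _ _).symm
    rw [e1, e2]
    have hp : q % L < L := Nat.mod_lt _ hL
    have hv1 := h1 (c + q % L) (by omega) (by omega)
    have hv2 := h2' (c + q % L) (by omega) (by omega)
    rw [show r + c + q % L = r + (c + q % L) by ring, show r' + c + q % L = r' + (c + q % L) by ring]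
    rw [hv1, hv2]
  intro m hm1 hm2
  have e1 : (r + m) % L = (r + c + (m + (L - 1) * c)) % L := by
    have : r + c + (m + (L - 1) * c) = r + m + c * L := by
      have hmul : (L - 1) * c = L * c - c := Nat.sub_one_mul L c
      have hle : c ≤ c * L := Nat.le_mul_of_pos_right c hL
      have : c + (L - 1) * c = c * L := by rw [hmul, Nat.mul_comm L c]; omega
      omega
    rw [this, Nat.add_mul_mod_self_right]
  have e2 : (r' + m) % L = (r' + c + (m + (L - 1) * c)) % L := by
    have : r' + c + (m + (L - 1) * c) = r' + m + c * L := by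
      have hmul : (L - 1) * c = L * c - c := Nat.sub_one_mul L c
      have hle : c ≤ c * L := Nat.le_mul_of_pos_right c hL
      have : c + (L - 1) * c = c * L := by rw [hmul, Nat.mul_comm L c]; omega
      omega
    rw [this, Nat.add_mul_mod_self_right]
  rw [e1, key, ← e2, h2' m hm1 hm2]

lemma aligned_merge {v : List α} (hv : v ≠ []) {w : ℕ → α} {r r' a b c d : ℕ}
    (h1 : Aligned v w r a b) (h2 : Aligned v w r' c d)
    (hac : a ≤ c) (hover : c + v.length ≤ b + 1) :
    Aligned v w r a (max b d) := by
  have hL : 0 < v.length := List.length_pos_iff.mpr hv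
  set L := v.length with hLdef
  intro m
  induction m using Nat.strong_induction_on with
  | _ m ih =>
    intro hm1 hm2
    by_cases hmb : m ≤ b
    · exact h1 m hm1 hmb
    · have hmd : m ≤ d := by omega
      have hmL : c + L ≤ m := by omega
      have hwm : w m = w (m - L) := by
        have e1 := h2 m (by omega) hmd
        have e2 := h2 (m - L) (by omega) (by omega)
        have e3 : (r' + m) % L = (r' + (m - L)) % L := by
          rw [show r' + m = r' + (m - L) + L by omega]
          exact (Nat.add_mod_right _ _)
        rw [e3, e2] at e1
        exact (Option.some.injEq _ _ ▸ e1).symm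
      have ihm := ih (m - L) (by omega) (by omega) (by omega)
      rw [hwm, ← ihm]
      congr 1
      rw [show r + m = r + (m - L) + L by omega]
      exact Nat.add_mod_right _ _

def Pow2 (u t : List α) : Prop := PowF u t ∨ PowF u.reverse t

lemma pow2_mono {u : List α} (hv : u ≠ []) {w : ℕ → α} {a b a' b' : ℕ}
    (h : Pow2 u (Subword w a b)) (ha : a ≤ a') (hb : b' ≤ b) : Pow2 u (Subword w a' b') := by
  have hv' : u.reverse ≠ [] := by simpa using hv
  rcases h with h | h
  · obtain ⟨r, hr⟩ := (powF_iff_aligned hv w a b).mp h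
    exact Or.inl ((powF_iff_aligned hv w a' b').mpr ⟨r, aligned_mono hr ha hb⟩)
  · obtain ⟨r, hr⟩ := (powF_iff_aligned hv' w a b).mp h
    exact Or.inr ((powF_iff_aligned hv' w a' b').mpr ⟨r, aligned_mono hr ha hb⟩)

lemma pow2_merge {u : List α} (hv : u ≠ []) {w : ℕ → α} {a b c d : ℕ}
    (h1 : Pow2 u (Subword w a b)) (h2 : Pow2 u (Subword w c d))
    (hac : a ≤ c) (hcb : c + u.length ≤ b + 1) (hcd : c + u.length ≤ d + 1) :
    Pow2 u (Subword w a (max b d)) := by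
  have hv' : u.reverse ≠ [] := by simpa using hv
  have hq : u.reverse.length = u.length := List.length_reverse
  rcases h1 with h1 | h1 <;> rcases h2 with h2 | h2
  · obtain ⟨r, hr⟩ := (powF_iff_aligned hv w a b).mp h1
    obtain ⟨r', hr'⟩ := (powF_iff_aligned hv w c d).mp h2
    have := aligned_transfer hv rfl hr hr' hac le_rfl hcb hcd
    exact Or.inl ((powF_iff_aligned hv w a _).mpr ⟨r, aligned_merge hv hr this hac hcb⟩)
  · obtain ⟨r, hr⟩ := (powF_iff_aligned hv w a b).mp h1
    obtain ⟨r', hr'⟩ := (powF_iff_aligned hv' w c d).mp h2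
    have := aligned_transfer hv hq hr hr' hac le_rfl hcb hcd
    exact Or.inl ((powF_iff_aligned hv w a _).mpr ⟨r, aligned_merge hv hr this hac hcb⟩)
  · obtain ⟨r, hr⟩ := (powF_iff_aligned hv' w a b).mp h1
    obtain ⟨r', hr'⟩ := (powF_iff_aligned hv w c d).mp h2
    have := aligned_transfer hv' hq.symm hr hr' hac le_rfl (by rwa [hq]) (by rwa [hq])
    exact Or.inr ((powF_iff_aligned hv' w a _).mpr ⟨r, aligned_merge hv' hr this hac (by rwa [hq])⟩)
  · obtain ⟨r, hr⟩ := (powF_iff_aligned hv' w a b).mp h1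
    obtain ⟨r', hr'⟩ := (powF_iff_aligned hv' w c d).mp h2
    have := aligned_transfer hv' rfl hr hr' hac le_rfl (by rwa [hq]) (by rwa [hq])
    exact Or.inr ((powF_iff_aligned hv' w a _).mpr ⟨r, aligned_merge hv' hr this hac (by rwa [hq])⟩)


lemma run_sep {γ : ℕ} {w : ℕ → α} {u : List α} (hv : u ≠ []) {a b c d : ℕ}
    (h1 : IsRun γ w u a b) (h2 : IsRun γ w u c d)
    (hac : a ≤ c) (hcb : c ≤ b + u.length + 1) : a = c ∧ b = d := by
  set n := u.length with hn
  have hn0 : 0 < n := List.length_pos_iff.mpr hv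
  obtain ⟨hab, _, ha, hp1, hl1, hr1⟩ := h1
  obtain ⟨hcd, _, hc, hp2, hl2, hr2⟩ := h2
  have P1 : Pow2 u (Subword w (a - n) (b + n)) := hp1
  have P2 : Pow2 u (Subword w (c - n) (d + n)) := hp2
  have hM := pow2_merge hv P1 P2 (by omega) (by omega) (by omega)
  by_cases hbd : b < d
  · exact absurd (pow2_mono hv hM le_rfl (by omega)) hr1
  · by_cases hacq : a < c
    · exact absurd (pow2_mono hv hM (by omega) (by omega)) hl2
    · have hae : a = c := by omega
      by_cases hdb : d < b
      · have := pow2_mono hv hM (by omega : a - n ≤ c - n) (by omega : d + n + 1 ≤ max (b + n) (d + n))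
        exact absurd this hr2
      · exact ⟨hae, by omega⟩

lemma pal_pointwise {w : ℕ → α} {i j : ℕ}
    (hpal : (Subword w i j).reverse = Subword w i j) :
    ∀ m, i ≤ m → m ≤ j → w m = w (i + j - m) := by
  intro m hm1 hm2
  have hlen : (Subword w i j).length = j + 1 - i := subword_length w i j
  have h := congrArg (fun l => l[m - i]?) hpal
  rw [List.getElem?_reverse (by omega), hlen] at h
  rw [subword_getElem?, subword_getElem?] at h
  rw [if_pos (by omega), if_pos (by omega)] at h
  rw [show i + (j + 1 - i - 1 - (m - i)) = i + j - m by omega,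
    show i + (m - i) = m by omega] at h
  exact (Option.some.inj h).symm

lemma subword_mirror {w : ℕ → α} {i j a b : ℕ}
    (P : ∀ m, i ≤ m → m ≤ j → w m = w (i + j - m))
    (hia : i ≤ a) (hab : a ≤ b) (hbj : b ≤ j) :
    Subword w (i + j - b) (i + j - a) = (Subword w a b).reverse := by
  apply List.ext_getElem?
  intro p
  rw [subword_getElem?]
  by_cases hp : p < b + 1 - a
  · rw [if_pos (by omega), List.getElem?_reverse (by rw [subword_length]; omega),
      subword_length, subword_getElem?, if_pos (by omega)]
    have hP := P (a + (b + 1 - a - 1 - p)) (by omega) (by omega)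
    rw [hP, show i + j - (a + (b + 1 - a - 1 - p)) = i + j - b + p by omega]
  · rw [if_neg (by omega)]
    rw [List.getElem?_eq_none]
    rw [List.length_reverse, subword_length]
    omega

lemma pow2_mirror {u : List α} (hv : u ≠ []) {w : ℕ → α} {i j a b : ℕ}
    (P : ∀ m, i ≤ m → m ≤ j → w m = w (i + j - m))
    (hia : i ≤ a) (hab : a ≤ b) (hbj : b ≤ j)
    (h : Pow2 u (Subword w a b)) : Pow2 u (Subword w (i + j - b) (i + j - a)) := by
  rw [subword_mirror P hia hab hbj]
  rcases h with h | h
  · exact Or.inr (powF_reverse.mp h)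
  · have := powF_reverse.mp h
    rw [List.reverse_reverse] at this
    exact Or.inl this

lemma run_mirror {γ : ℕ} {w : ℕ → α} {u : List α} (hγ : 3 ≤ γ) (hv : u ≠ [])
    (hu3 : ¬ IsPowFactor u ((List.range (γ * u.length)).map fun n => w (1 + n)))
    {i j a b : ℕ} (hij : i ≤ j)
    (P : ∀ m, i ≤ m → m ≤ j → w m = w (i + j - m))
    (h : IsRun γ w u a b) (hia : i + u.length < a) (hbj : b + u.length < j) :
    IsRun γ w u (i + j - b) (i + j - a) := by
  set n := u.length with hn
  have hn0 : 0 < n := List.length_pos_iff.mpr hv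
  obtain ⟨hab, hlen, ha, hp1, hl1, hr1⟩ := h
  have hgam : γ * n = (γ - 2) * n + 2 * n := by
    have h3 : γ - 2 + 2 = γ := by omega
    calc γ * n = (γ - 2 + 2) * n := by rw [h3]
    _ = (γ - 2) * n + 2 * n := by ring
  refine ⟨by omega, ?_, ?_, ?_, ?_, ?_⟩
  · rw [show i + j - a - (i + j - b) + 1 = b - a + 1 by omega]
    exact hlen
  · -- n + 1 < i + j - b
    by_contra hcon
    push_neg at hcon
    -- then i + j - b = n + 1, and prefix of length γ n is a power factor
    have ha' : n + 1 ≤ i + j - b := by omega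
    have heq : i + j - b = n + 1 := by omega
    have hW : Pow2 u (Subword w (i + j - b - n) (i + j - a + n)) := by
      have := pow2_mirror hv P (show i ≤ a - n by omega) (show a - n ≤ b + n by omega)
        (show b + n ≤ j by omega) hp1
      rw [show i + j - (b + n) = i + j - b - n by omega,
        show i + j - (a - n) = i + j - a + n by omega] at this
      exact this
    have hlen' : (γ - 2) * n ≤ b - a + 1 := by rw [hn]; exact hlen
    have hpre : Pow2 u (Subword w 1 (γ * n)) := by
      apply pow2_mono hv hW (by omega)
      omega
    have : ((List.range (γ * n)).map fun m => w (1 + m)) = Subword w 1 (γ * n) := by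
      unfold Subword
      norm_num
    rw [← this] at hpre
    exact hu3 hpre
  · -- window
    have := pow2_mirror hv P (show i ≤ a - n by omega) (show a - n ≤ b + n by omega)
      (show b + n ≤ j by omega) hp1
    rw [show i + j - (b + n) = i + j - b - n by omega,
      show i + j - (a - n) = i + j - a + n by omega] at this
    exact this
  · -- left maximality
    intro hcon
    have hC : Pow2 u (Subword w (i + j - b - n - 1) (i + j - a + n)) := hcon
    have := pow2_mirror hv P (show i ≤ i + j - b - n - 1 by omega)
      (show i + j - b - n - 1 ≤ i + j - a + n by omega)
      (show i + j - a + n ≤ j by omega) hC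
    rw [show i + j - (i + j - a + n) = a - n by omega,
      show i + j - (i + j - b - n - 1) = b + n + 1 by omega] at this
    exact hr1 this
  · -- right maximality
    intro hcon
    have hC : Pow2 u (Subword w (i + j - b - n) (i + j - a + n + 1)) := hcon
    have := pow2_mirror hv P (show i ≤ i + j - b - n by omega)
      (show i + j - b - n ≤ i + j - a + n + 1 by omega)
      (show i + j - a + n + 1 ≤ j by omega) hC
    rw [show i + j - (i + j - a + n + 1) = a - n - 1 by omega,
      show i + j - (i + j - b - n) = b + n by omega] at this
    exact hl1 this

end Run13

/-- a run deep inside a palindrome produces a centered standard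
palindrome. -/
theorem run_gives_centered_stdpal {α : Type*} (γ : ℕ) (hγ : 3 ≤ γ)
    (w : ℕ → α) (u : List α) (hw : ¬ UltimatelyPeriodic w) (hu : InPi γ w u)
    (i j m1 m2 m3 m4 k kb : ℕ) (hij : i ≤ j)
    (hpal : (Subword w i j).reverse = Subword w i j)
    (hrun : IsRun γ w u m1 m2)
    (h1 : i + u.length < m1) (h2 : m2 + u.length < j)
    (hm3 : m3 = i + j - m2) (hm4 : m4 = i + j - m1)
    (hk : k = min m1 m3) (hkb : kb = i + j - k) :
    IsCnStdPal γ w u i j (k - u.length) (kb + u.length) := by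
  obtain ⟨hprim, -, hu3, -⟩ := hu
  obtain ⟨hv, -⟩ := hprim
  have hn0 : 0 < u.length := List.length_pos_iff.mpr hv
  have P := Run13.pal_pointwise hpal
  have hm12 : m1 < m2 := hrun.1
  have hm1n : u.length + 1 < m1 := hrun.2.2.1
  have hrunB : IsRun γ w u m3 m4 := by
    rw [hm3, hm4]
    exact Run13.run_mirror hγ hv hu3 hij P hrun h1 h2
  have hm34 : m3 < m4 := hrunB.1
  have hm3n : u.length + 1 < m3 := hrunB.2.2.1
  have hm3d : i + u.length < m3 := by omega
  have hm4j : m4 + u.length < j := by omega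
  have hkn : u.length + 1 < k := by omega
  have hkl : i + u.length < k := by omega
  have hkkb : k < kb := by omega
  have hkbj : kb + u.length < j := by omega
  obtain ⟨e, s, hRk, hRkb, hej, his⟩ :
      ∃ e s, IsRun γ w u k e ∧ IsRun γ w u s kb ∧ e + u.length < j ∧ i + u.length < s := by
    rcases le_total m1 m3 with hcmp | hcmp
    · refine ⟨m2, m3, ?_, ?_, h2, hm3d⟩
      · rwa [hk, min_eq_left hcmp]
      · have hkbm : kb = m4 := by omega
        rw [hkbm]; exact hrunB
    · refine ⟨m4, m1, ?_, ?_, hm4j, h1⟩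
      · rwa [hk, min_eq_right hcmp]
      · have hkbm : kb = m2 := by omega
        rw [hkbm]; exact hrun
  have hke : k < e := hRk.1
  have hskb : s < kb := hRkb.1
  have C1 : ∀ p, k - u.length - 1 ≤ p → p ≤ k - 1 →
      ∀ a b, IsRun γ w u a b → ¬(a ≤ p ∧ p ≤ b) := by
    rintro p hp1 hp2 a b hR ⟨hap, hpb⟩
    have := Run13.run_sep hv hR hRk (by omega) (by omega)
    omega
  have C2 : ∀ p, kb + 1 ≤ p → p ≤ kb + u.length + 1 →
      ∀ a b, IsRun γ w u a b → ¬(a ≤ p ∧ p ≤ b) := by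
    rintro p hp1 hp2 a b hR ⟨hap, hpb⟩
    rcases le_total s a with hsa | has
    · have := Run13.run_sep hv hRkb hR hsa (by omega)
      omega
    · have := Run13.run_sep hv hR hRkb has (by omega)
      omega
  have C3 : ∀ p a b, k - u.length ≤ p → p ≤ kb + u.length → IsRun γ w u a b →
      a ≤ p → p ≤ b → i + u.length < a ∧ b + u.length < j := by
    intro p a b hp1 hp2 hR hap hpb
    rcases le_total a k with hak | hka
    · have := Run13.run_sep hv hR hRk hak (by omega)
      constructor <;> omega
    · rcases le_total s a with hsa | has
      · have := Run13.run_sep hv hRkb hR hsa (by omega)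
        constructor <;> omega
      · by_cases hsb : s ≤ b + u.length + 1
        · have := Run13.run_sep hv hR hRkb has hsb
          constructor <;> omega
        · push_neg at hsb
          constructor <;> omega
  have C4dir : ∀ m, k - u.length ≤ m → m ≤ kb + u.length →
      RpoDom γ w u m → RpoDom γ w u (i + j - m) := by
    intro m hma hmb hDm
    refine ⟨by omega, ?_⟩
    rintro a b hR ⟨hab1, hab2⟩
    have hdeep := C3 (i + j - m) a b (by omega) (by omega) hR hab1 hab2
    have hRm : IsRun γ w u (i + j - b) (i + j - a) :=
      Run13.run_mirror hγ hv hu3 hij P hR hdeep.1 hdeep.2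
    exact hDm.2 _ _ hRm ⟨by omega, by omega⟩
  refine ⟨⟨by omega, ⟨by omega, C1 _ (by omega) (by omega)⟩,
    ⟨by omega, C2 _ (by omega) (by omega)⟩, ?_, ?_, ?_, ?_⟩, by omega, by omega, by omega⟩
  · have := Run13.subword_mirror P (show i ≤ k - u.length - 1 by omega)
      (show k - u.length - 1 ≤ kb + u.length + 1 by omega)
      (show kb + u.length + 1 ≤ j by omega)
    rw [show i + j - (kb + u.length + 1) = k - u.length - 1 by omega,
      show i + j - (k - u.length - 1) = kb + u.length + 1 by omega] at this
    exact this.symm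
  · intro m hma hmb
    exact ⟨by omega, C1 m (by omega) (by omega)⟩
  · intro m hma hmb
    exact ⟨by omega, C2 m (by omega) hmb⟩
  · intro m hm1 hm2
    rw [show k - u.length + (kb + u.length) - m = i + j - m by omega]
    constructor
    · exact C4dir m hm1 hm2
    · intro h
      have := C4dir (i + j - m) (by omega) (by omega) h
      rwa [show i + j - (i + j - m) = m by omega] at this
end
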